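/- Let f : ℝ → ℝ be strictly positive everywhere, suppose log f is strictly concave on ℝ, and suppose ∫_ℝ f(x) dx < ∞. Then f is bounded above on ℝ. -/

import Mathlib

open MeasureTheory

/-- Every strictly positive function on ℝ whose logarithm is strictly concave and whose
integral is finite is bounded above. -/
theorem strictly_logconcave_integrable_bounded (f : ℝ → ℝ)
    (hpos : ∀ x, 0 < f x)
    (hconc : StrictConcaveOn ℝ Set.univ (fun x => Real.log (f x)))
    (hint : Integrable f) :
    ∃ M : ℝ, ∀ x, f x ≤ M := by
  by_contra hb
  push_neg at hb
  set g : ℝ → ℝ := fun x => Real.log (f x) with hg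
  have hcc : ConcaveOn ℝ Set.univ g := hconc.concaveOn
  set K : ℝ := |g 0| + |g 1| + |g (-1)| with hK
  have hK0 : 0 ≤ K := by positivity
  -- linear upper bound
  have hub : ∀ x, g x ≤ K * (1 + |x|) := by
    intro x
    rcases lt_trichotomy x 0 with hx | hx | hx
    · rcases le_or_gt x (-1) with h1 | h1
      · have hxne : x ≠ 0 := ne_of_lt hx
        have key := hcc.2 (Set.mem_univ x) (Set.mem_univ (0:ℝ))
          (show (0:ℝ) ≤ -1/x by rw [div_nonneg_iff]; right; constructor <;> linarith)
          (show (0:ℝ) ≤ 1 - (-1/x) by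
            rw [sub_nonneg, div_le_iff_of_neg hx]; linarith)
          (show -1/x + (1 - (-1/x)) = 1 by ring)
        simp only [smul_eq_mul] at key
        have hpt : (-1/x) * x + (1 - (-1/x)) * 0 = -1 := by field_simp <;> ring
        rw [hpt] at key
        have hxneg : 0 < -x := by linarith
        have key2 : (-x) * ((-1/x) * g x + (1 - (-1/x)) * g 0) ≤ (-x) * g (-1) :=
          mul_le_mul_of_nonneg_left key (le_of_lt hxneg)
        have hsimp : (-x) * ((-1/x) * g x + (1 - (-1/x)) * g 0) = g x + (-x - 1) * g 0 := by
          field_simp <;> ring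
        rw [hsimp] at key2
        have hA : (-x) * g (-1) ≤ (-x) * |g (-1)| :=
          mul_le_mul_of_nonneg_left (le_abs_self _) (by linarith)
        have hB : (-x - 1) * (-(g 0)) ≤ (-x - 1) * |g 0| :=
          mul_le_mul_of_nonneg_left (neg_le_abs _) (by linarith)
        rw [abs_of_neg hx, hK]
        nlinarith [abs_nonneg (g 0), abs_nonneg (g 1), abs_nonneg (g (-1)),
          mul_nonneg (show (0:ℝ) ≤ -x by linarith) (abs_nonneg (g 1))]
      · have hxne : (1:ℝ) - x ≠ 0 := by intro h; linarith [h]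
        have h1x : (0:ℝ) < 1 - x := by linarith
        have key := hcc.2 (Set.mem_univ x) (Set.mem_univ (1:ℝ))
          (show (0:ℝ) ≤ 1/(1-x) by positivity)
          (show (0:ℝ) ≤ 1 - 1/(1-x) by rw [sub_nonneg, div_le_one h1x]; linarith)
          (show 1/(1-x) + (1 - 1/(1-x)) = 1 by ring)
        simp only [smul_eq_mul] at key
        have hpt : (1/(1-x)) * x + (1 - 1/(1-x)) * 1 = 0 := by field_simp <;> ring
        rw [hpt] at key
        have key2 : (1-x) * ((1/(1-x)) * g x + (1 - 1/(1-x)) * g 1) ≤ (1-x) * g 0 :=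
          mul_le_mul_of_nonneg_left key (le_of_lt h1x)
        have hsimp : (1-x) * ((1/(1-x)) * g x + (1 - 1/(1-x)) * g 1) = g x + (-x) * g 1 := by
          field_simp <;> ring
        rw [hsimp] at key2
        have hA : (1-x) * g 0 ≤ (1-x) * |g 0| :=
          mul_le_mul_of_nonneg_left (le_abs_self _) (by linarith)
        have hB : (-x) * (-(g 1)) ≤ (-x) * |g 1| :=
          mul_le_mul_of_nonneg_left (neg_le_abs _) (by linarith)
        rw [abs_of_neg hx, hK]
        nlinarith [abs_nonneg (g 0), abs_nonneg (g 1), abs_nonneg (g (-1)),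
          mul_nonneg (show (0:ℝ) ≤ -x by linarith) (abs_nonneg (g (-1)))]
    · subst hx
      simp only [abs_zero]
      have h := le_abs_self (g 0)
      have he : K * (1 + 0) = K := by ring
      rw [he, hK]
      nlinarith [abs_nonneg (g 1), abs_nonneg (g (-1))]
    · rcases le_or_gt x 1 with h1 | h1
      · have hxne : (1:ℝ) + x ≠ 0 := by intro h; linarith [h]
        have h1x : (0:ℝ) < 1 + x := by linarith
        have key := hcc.2 (Set.mem_univ (-1:ℝ)) (Set.mem_univ x)
          (show (0:ℝ) ≤ x/(1+x) by positivity)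
          (show (0:ℝ) ≤ 1 - x/(1+x) by rw [sub_nonneg, div_le_one h1x]; linarith)
          (show x/(1+x) + (1 - x/(1+x)) = 1 by ring)
        simp only [smul_eq_mul] at key
        have hpt : (x/(1+x)) * (-1) + (1 - x/(1+x)) * x = 0 := by field_simp <;> ring
        rw [hpt] at key
        have key2 : (1+x) * ((x/(1+x)) * g (-1) + (1 - x/(1+x)) * g x) ≤ (1+x) * g 0 :=
          mul_le_mul_of_nonneg_left key (le_of_lt h1x)
        have hsimp : (1+x) * ((x/(1+x)) * g (-1) + (1 - x/(1+x)) * g x) = x * g (-1) + g x := by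
          field_simp <;> ring
        rw [hsimp] at key2
        have hA : (1+x) * g 0 ≤ (1+x) * |g 0| :=
          mul_le_mul_of_nonneg_left (le_abs_self _) (by linarith)
        have hB : x * (-(g (-1))) ≤ x * |g (-1)| :=
          mul_le_mul_of_nonneg_left (neg_le_abs _) (by linarith)
        rw [abs_of_pos hx, hK]
        nlinarith [abs_nonneg (g 0), abs_nonneg (g 1), abs_nonneg (g (-1)),
          mul_nonneg (show (0:ℝ) ≤ x by linarith) (abs_nonneg (g 1))]
      · have hxne : x ≠ 0 := ne_of_gt hx
        have hx0 : (0:ℝ) < x := hx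
        have key := hcc.2 (Set.mem_univ (0:ℝ)) (Set.mem_univ x)
          (show (0:ℝ) ≤ 1 - 1/x by rw [sub_nonneg, div_le_one hx0]; linarith)
          (show (0:ℝ) ≤ 1/x by positivity)
          (show 1 - 1/x + 1/x = 1 by ring)
        simp only [smul_eq_mul] at key
        have hpt : (1 - 1/x) * 0 + (1/x) * x = 1 := by field_simp <;> ring
        rw [hpt] at key
        have key2 : x * ((1 - 1/x) * g 0 + (1/x) * g x) ≤ x * g 1 :=
          mul_le_mul_of_nonneg_left key (le_of_lt hx0)
        have hsimp : x * ((1 - 1/x) * g 0 + (1/x) * g x) = (x - 1) * g 0 + g x := by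
          field_simp <;> ring
        rw [hsimp] at key2
        have hA : x * g 1 ≤ x * |g 1| :=
          mul_le_mul_of_nonneg_left (le_abs_self _) (by linarith)
        have hB : (x - 1) * (-(g 0)) ≤ (x - 1) * |g 0| :=
          mul_le_mul_of_nonneg_left (neg_le_abs _) (by linarith)
        rw [abs_of_pos hx, hK]
        nlinarith [abs_nonneg (g 0), abs_nonneg (g 1), abs_nonneg (g (-1)),
          mul_nonneg (show (0:ℝ) ≤ x by linarith) (abs_nonneg (g (-1)))]
  -- superlevel set
  set c : ℝ := min (g 1) (g (-1)) with hc
  set S : Set ℝ := {x | c ≤ g x} with hS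
  have hSconv : Convex ℝ S := by
    have := hcc.convex_ge c
    simpa [S, Set.sep_univ] using this
  have h1S : (1:ℝ) ∈ S := by simp only [hS, Set.mem_setOf_eq]; exact min_le_left _ _
  have hm1S : (-1:ℝ) ∈ S := by simp only [hS, Set.mem_setOf_eq]; exact min_le_right _ _
  -- witnesses far away
  have hwit : ∀ n : ℝ, 0 ≤ n → ∃ x ∈ S, n < |x| := by
    intro n hn
    obtain ⟨x, hx⟩ := hb (Real.exp (max (K * (1 + n)) c))
    have hlog : max (K * (1 + n)) c < g x :=
      (Real.lt_log_iff_exp_lt (hpos x)).mpr hx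
    refine ⟨x, le_of_lt (lt_of_le_of_lt (le_max_right _ _) hlog), ?_⟩
    by_contra hcon
    push_neg at hcon
    have := hub x
    have : g x ≤ K * (1 + n) := by nlinarith
    have := le_max_left (K * (1 + n)) c
    linarith
  -- one side is unbounded
  have hside : (∀ r : ℝ, ∃ x ∈ S, r < x) ∨ (∀ r : ℝ, ∃ x ∈ S, x < -r) := by
    by_contra hcon
    push_neg at hcon
    obtain ⟨⟨r₁, hr₁⟩, ⟨r₂, hr₂⟩⟩ := hcon
    obtain ⟨x, hxS, hxgt⟩ := hwit (max 0 (max r₁ r₂)) (le_max_left _ _)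
    rcases le_or_gt 0 x with h | h
    · rw [abs_of_nonneg h] at hxgt
      exact absurd (hr₁ x hxS) (not_le.mpr (lt_of_le_of_lt (le_max_left _ _) (lt_of_le_of_lt (le_max_right _ _) hxgt)))
    · rw [abs_of_neg h] at hxgt
      have : x < -r₂ := by
        have h2 : r₂ ≤ max 0 (max r₁ r₂) := le_trans (le_max_right r₁ r₂) (le_max_right _ _)
        linarith
      exact absurd (hr₂ x hxS) (not_le.mpr (by linarith [hr₂ x hxS]))
  -- derive infinite measure contradiction
  have hfin : volume {x : ℝ | Real.exp c ≤ f x} < ⊤ :=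
    hint.measure_ge_lt_top (Real.exp_pos c)
  have hSsub : S ⊆ {x : ℝ | Real.exp c ≤ f x} := by
    intro x hx
    have : Real.exp c ≤ Real.exp (g x) := Real.exp_le_exp.mpr hx
    rwa [hg, Real.exp_log (hpos x)] at this
  have hOC : S.OrdConnected := hSconv.ordConnected
  rcases hside with hR | hL
  · have hIci : Set.Ici (1:ℝ) ⊆ S := by
      intro t ht
      obtain ⟨x, hxS, hxgt⟩ := hR t
      exact hOC.out h1S hxS ⟨ht, le_of_lt hxgt⟩
    have : volume (Set.Ici (1:ℝ)) ≤ volume {x : ℝ | Real.exp c ≤ f x} :=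
      measure_mono (le_trans hIci hSsub)
    rw [Real.volume_Ici] at this
    exact absurd (lt_of_le_of_lt this hfin) (by simp)
  · have hIic : Set.Iic (-1:ℝ) ⊆ S := by
      intro t ht
      obtain ⟨x, hxS, hxlt⟩ := hL (-t)
      have : x < t := by linarith [hxlt]
      exact hOC.out hxS hm1S ⟨le_of_lt this, ht⟩
    have : volume (Set.Iic (-1:ℝ)) ≤ volume {x : ℝ | Real.exp c ≤ f x} :=
      measure_mono (le_trans hIic hSsub)
    rw [Real.volume_Iic] at this
    exact absurd (lt_of_le_of_lt this hfin) (by simp)
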